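/- Let R be a Hermite ring. Then R is an elementary divisor ring if and only if for every a ∈ R the quotient ring R/(a) is a Π₂ ring, i.e., every unimodular 2×2 matrix over R/(a) with determinant 0 is extendable. -/

import Mathlib

/-- A 2×2 matrix over a commutative ring is *unimodular* if the ideal generated by
its entries is the whole ring, i.e. some linear combination of its entries is 1. -/
def MatUnimodular {R : Type*} [CommRing R] (A : Matrix (Fin 2) (Fin 2) R) : Prop :=
  ∃ p q r s : R, p * A 0 0 + q * A 0 1 + r * A 1 0 + s * A 1 1 = 1

/-- A 2×2 matrix `A` is *extendable* if there is a 3×3 matrix of determinant 1 whose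
upper-left 2×2 block is `A`. -/
def Extendable {R : Type*} [CommRing R] (A : Matrix (Fin 2) (Fin 2) R) : Prop :=
  ∃ B : Matrix (Fin 3) (Fin 3) R, B.det = 1 ∧
    ∀ i j : Fin 2, B i.castSucc j.castSucc = A i j

/-- A 2×2 matrix `A` is *simply extendable* if there is a 3×3 matrix of determinant 1
whose upper-left 2×2 block is `A` and whose (3,3) entry is 0. -/
def SimplyExtendable {R : Type*} [CommRing R] (A : Matrix (Fin 2) (Fin 2) R) : Prop :=
  ∃ B : Matrix (Fin 3) (Fin 3) R, B.det = 1 ∧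
    (∀ i j : Fin 2, B i.castSucc j.castSucc = A i j) ∧ B 2 2 = 0

/-- A 2×2 matrix is *non-full* if it is a product of a 2×1 matrix and a 1×2 matrix. -/
def NonFull {R : Type*} [CommRing R] (A : Matrix (Fin 2) (Fin 2) R) : Prop :=
  ∃ l m n q : R, A 0 0 = l * n ∧ A 0 1 = l * q ∧ A 1 0 = m * n ∧ A 1 1 = m * q

/-- `R` is a *Hermite ring* (in the sense of Kaplansky) if every pair `(a, b)` can be
written as `a = r*s`, `b = r*t` with `(s, t)` unimodular. -/
def IsHermiteRing (R : Type*) [CommRing R] : Prop :=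
  ∀ a b : R, ∃ r s t : R, a = r * s ∧ b = r * t ∧ ∃ x y : R, s * x + t * y = 1

/-- `R` is an *elementary divisor ring* if every 2×2 matrix over `R` admits diagonal
reduction `M * A * N = diag(d₁, d₂)` with `M`, `N` invertible and `d₁ ∣ d₂`. -/
def IsEDR (R : Type*) [CommRing R] : Prop :=
  ∀ A : Matrix (Fin 2) (Fin 2) R, ∃ M N : Matrix (Fin 2) (Fin 2) R,
    IsUnit M.det ∧ IsUnit N.det ∧ ∃ d₁ d₂ : R, d₁ ∣ d₂ ∧
      M * A * N = Matrix.of ![![d₁, 0], ![0, d₂]]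

lemma extendable_gives_form {S : Type*} [CommRing S] (A : Matrix (Fin 2) (Fin 2) S)
    (hdet : A.det = 0) (hext : Extendable A) :
    ∃ x₁ x₂ y₁ y₂ : S,
      x₁ * y₁ * A 0 0 + x₁ * y₂ * A 0 1 + x₂ * y₁ * A 1 0 + x₂ * y₂ * A 1 1 = 1 := by
  obtain ⟨B, hB, hb⟩ := hext
  have h00 : B 0 0 = A 0 0 := by simpa using hb 0 0
  have h01 : B 0 1 = A 0 1 := by simpa using hb 0 1
  have h10 : B 1 0 = A 1 0 := by simpa using hb 1 0
  have h11 : B 1 1 = A 1 1 := by simpa using hb 1 1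
  rw [Matrix.det_fin_three, h00, h01, h10, h11] at hB
  rw [Matrix.det_fin_two] at hdet
  exact ⟨-(B 1 2), B 0 2, B 2 1, -(B 2 0), by linear_combination hB - B 2 2 * hdet⟩

lemma diag_of_key {R : Type*} [CommRing R] (A : Matrix (Fin 2) (Fin 2) R)
    (d a00 a01 a10 a11 s t Y₁ Y₂ : R)
    (h00 : A 0 0 = d * a00) (h01 : A 0 1 = d * a01)
    (h10 : A 1 0 = d * a10) (h11 : A 1 1 = d * a11)
    (key : (s * a00 + t * a10) * Y₁ + (s * a01 + t * a11) * Y₂ = 1) :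
    ∃ M N : Matrix (Fin 2) (Fin 2) R,
      IsUnit M.det ∧ IsUnit N.det ∧ ∃ d₁ d₂ : R, d₁ ∣ d₂ ∧
        M * A * N = Matrix.of ![![d₁, 0], ![0, d₂]] := by
  refine ⟨!![s, t; -(a10 * Y₁ + a11 * Y₂), a00 * Y₁ + a01 * Y₂],
          !![Y₁, -(s * a01 + t * a11); Y₂, s * a00 + t * a10],
          ?_, ?_, d, d * (a00 * a11 - a01 * a10), ⟨_, rfl⟩, ?_⟩
  · have : (!![s, t; -(a10 * Y₁ + a11 * Y₂), a00 * Y₁ + a01 * Y₂]).det = 1 := by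
      rw [Matrix.det_fin_two_of]; linear_combination key
    rw [this]; exact isUnit_one
  · have : (!![Y₁, -(s * a01 + t * a11); Y₂, s * a00 + t * a10]).det = 1 := by
      rw [Matrix.det_fin_two_of]; linear_combination key
    rw [this]; exact isUnit_one
  · ext i j
    fin_cases i <;> fin_cases j <;>
      simp [Matrix.mul_apply, Matrix.vecMul, dotProduct, Fin.sum_univ_two, h00, h01, h10, h11]
    · linear_combination d * key
    · ring
    · ring
    · linear_combination (d * (a00 * a11 - a01 * a10)) * key

lemma diag_of_form {R : Type*} [CommRing R] (hR : IsHermiteRing R) (A : Matrix (Fin 2) (Fin 2) R)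
    (d a00 a01 a10 a11 x₁ x₂ y₁ y₂ lam : R)
    (h00 : A 0 0 = d * a00) (h01 : A 0 1 = d * a01)
    (h10 : A 1 0 = d * a10) (h11 : A 1 1 = d * a11)
    (hf : x₁ * y₁ * a00 + x₁ * y₂ * a01 + x₂ * y₁ * a10 + x₂ * y₂ * a11
        = 1 + lam * (a00 * a11 - a01 * a10)) :
    ∃ M N : Matrix (Fin 2) (Fin 2) R,
      IsUnit M.det ∧ IsUnit N.det ∧ ∃ d₁ d₂ : R, d₁ ∣ d₂ ∧
        M * A * N = Matrix.of ![![d₁, 0], ![0, d₂]] := by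
  obtain ⟨e, s, t, hx₁, hx₂, u, v, huv⟩ := hR x₁ x₂
  refine diag_of_key A d a00 a01 a10 a11 s t
    (e * y₁ - lam * (a11 * u - a01 * v)) (e * y₂ - lam * (a00 * v - a10 * u))
    h00 h01 h10 h11 ?_
  linear_combination hf - (y₁ * a00 + y₂ * a01) * hx₁ - (y₁ * a10 + y₂ * a11) * hx₂
    - lam * (a00 * a11 - a01 * a10) * huv

lemma pi2_of_edr (R : Type*) [CommRing R] (hE : IsEDR R) :
    ∀ a : R, ∀ A : Matrix (Fin 2) (Fin 2) (R ⧸ Ideal.span {a}),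
      MatUnimodular A → A.det = 0 → Extendable A := by
  intro a A hAuni hAdet
  obtain ⟨a00, h00⟩ := Ideal.Quotient.mk_surjective (I := Ideal.span {a}) (A 0 0)
  obtain ⟨a01, h01⟩ := Ideal.Quotient.mk_surjective (I := Ideal.span {a}) (A 0 1)
  obtain ⟨a10, h10⟩ := Ideal.Quotient.mk_surjective (I := Ideal.span {a}) (A 1 0)
  obtain ⟨a11, h11⟩ := Ideal.Quotient.mk_surjective (I := Ideal.span {a}) (A 1 1)
  obtain ⟨M, N, hM, hN, d₁, d₂, hd, heq⟩ := hE !![a00, a01; a10, a11]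
  set mk : R →+* R ⧸ Ideal.span {a} := Ideal.Quotient.mk (Ideal.span {a}) with hmk
  set M' : Matrix (Fin 2) (Fin 2) (R ⧸ Ideal.span {a}) := mk.mapMatrix M with hM'def
  set N' : Matrix (Fin 2) (Fin 2) (R ⧸ Ideal.span {a}) := mk.mapMatrix N with hN'def
  have hM' : IsUnit M'.det := by rw [hM'def, ← RingHom.map_det]; exact hM.map mk
  have hN' : IsUnit N'.det := by rw [hN'def, ← RingHom.map_det]; exact hN.map mk
  have heqS : M' * A * N' = Matrix.of ![![mk d₁, 0], ![0, mk d₂]] := by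
    have h := congrArg mk.mapMatrix heq
    rw [map_mul, map_mul] at h
    have hAm : mk.mapMatrix !![a00, a01; a10, a11] = A := by
      ext i j
      fin_cases i <;> fin_cases j <;>
        simp [RingHom.mapMatrix_apply, Matrix.map_apply, h00, h01, h10, h11]
    rw [hAm] at h
    rw [hM'def, hN'def, h]
    ext i j
    fin_cases i <;> fin_cases j <;>
      simp [RingHom.mapMatrix_apply, Matrix.map_apply]
  have hAexpr : A = M'⁻¹ * Matrix.of ![![mk d₁, 0], ![0, mk d₂]] * N'⁻¹ := by
    calc A = M'⁻¹ * (M' * A) := by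
            rw [← Matrix.mul_assoc, Matrix.nonsing_inv_mul _ hM', Matrix.one_mul]
      _ = M'⁻¹ * (M' * A * N' * N'⁻¹) := by
            rw [Matrix.mul_assoc (M' * A), Matrix.mul_nonsing_inv _ hN', Matrix.mul_one]
      _ = M'⁻¹ * (Matrix.of ![![mk d₁, 0], ![0, mk d₂]] * N'⁻¹) := by rw [heqS]
      _ = _ := (Matrix.mul_assoc _ _ _).symm
  have hA : ∀ i j : Fin 2, A i j
      = M'⁻¹ i 0 * mk d₁ * N'⁻¹ 0 j + M'⁻¹ i 1 * mk d₂ * N'⁻¹ 1 j := by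
    intro i j
    conv_lhs => rw [hAexpr]
    fin_cases i <;> fin_cases j <;>
      simp [Matrix.mul_apply, Fin.sum_univ_two]
  obtain ⟨p, q, r, s, hu⟩ := hAuni
  obtain ⟨ee, hee⟩ := hd
  have h1 : mk d₁ * (p * (M'⁻¹ 0 0 * N'⁻¹ 0 0) + q * (M'⁻¹ 0 0 * N'⁻¹ 0 1)
        + r * (M'⁻¹ 1 0 * N'⁻¹ 0 0) + s * (M'⁻¹ 1 0 * N'⁻¹ 0 1))
      + mk d₂ * (p * (M'⁻¹ 0 1 * N'⁻¹ 1 0) + q * (M'⁻¹ 0 1 * N'⁻¹ 1 1)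
        + r * (M'⁻¹ 1 1 * N'⁻¹ 1 0) + s * (M'⁻¹ 1 1 * N'⁻¹ 1 1)) = 1 := by
    linear_combination hu - p * (hA 0 0) - q * (hA 0 1) - r * (hA 1 0) - s * (hA 1 1)
  have hδ2e : mk d₂ = mk d₁ * mk ee := by rw [← map_mul, ← hee]
  set P := p * (M'⁻¹ 0 0 * N'⁻¹ 0 0) + q * (M'⁻¹ 0 0 * N'⁻¹ 0 1)
        + r * (M'⁻¹ 1 0 * N'⁻¹ 0 0) + s * (M'⁻¹ 1 0 * N'⁻¹ 0 1) with hP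
  set Q := p * (M'⁻¹ 0 1 * N'⁻¹ 1 0) + q * (M'⁻¹ 0 1 * N'⁻¹ 1 1)
        + r * (M'⁻¹ 1 1 * N'⁻¹ 1 0) + s * (M'⁻¹ 1 1 * N'⁻¹ 1 1) with hQ
  have hg : mk d₁ * (P + mk ee * Q) = 1 := by linear_combination h1 - Q * hδ2e
  have hdd : mk d₁ * mk d₂ = 0 := by
    have hdet : (M' * A * N').det = 0 := by
      rw [Matrix.det_mul, Matrix.det_mul, hAdet]; ring
    rw [heqS, Matrix.det_fin_two_of] at hdet
    linear_combination hdet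
  have hδ20 : mk d₂ = 0 := by linear_combination (P + mk ee * Q) * hdd - mk d₂ * hg
  have hMinvdet : (M'⁻¹).det * M'.det = 1 := by
    rw [← Matrix.det_mul, Matrix.nonsing_inv_mul _ hM', Matrix.det_one]
  have hNinvdet : (N'⁻¹).det * N'.det = 1 := by
    rw [← Matrix.det_mul, Matrix.nonsing_inv_mul _ hN', Matrix.det_one]
  have hw : IsUnit ((M'⁻¹).det * (N'⁻¹).det * mk d₁) :=
    ((IsUnit.of_mul_eq_one _ hMinvdet).mul (IsUnit.of_mul_eq_one _ hNinvdet)).mul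
      (IsUnit.of_mul_eq_one _ hg)
  obtain ⟨y, hy⟩ := isUnit_iff_exists_inv.mp hw
  refine ⟨!![M'⁻¹ 0 0, M'⁻¹ 0 1, 0; M'⁻¹ 1 0, M'⁻¹ 1 1, 0; 0, 0, 1]
      * !![mk d₁, 0, 0; 0, 0, 1; 0, -y, 0]
      * !![N'⁻¹ 0 0, N'⁻¹ 0 1, 0; N'⁻¹ 1 0, N'⁻¹ 1 1, 0; 0, 0, 1], ?_, ?_⟩
  · rw [Matrix.det_mul, Matrix.det_mul, Matrix.det_fin_three, Matrix.det_fin_three,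
      Matrix.det_fin_three]
    simp
    have e1 : (M'⁻¹).det = M'⁻¹ 0 0 * M'⁻¹ 1 1 - M'⁻¹ 0 1 * M'⁻¹ 1 0 := Matrix.det_fin_two _
    have e2 : (N'⁻¹).det = N'⁻¹ 0 0 * N'⁻¹ 1 1 - N'⁻¹ 0 1 * N'⁻¹ 1 0 := Matrix.det_fin_two _
    rw [e1, e2] at hy
    linear_combination hy
  · intro i j
    fin_cases i <;> fin_cases j <;>
      simp [Matrix.mul_apply, Fin.sum_univ_three]
    · rw [hA 0 0]; linear_combination -(M'⁻¹ 0 1 * N'⁻¹ 1 0) * hδ20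
    · rw [hA 0 1]; linear_combination -(M'⁻¹ 0 1 * N'⁻¹ 1 1) * hδ20
    · rw [hA 1 0]; linear_combination -(M'⁻¹ 1 1 * N'⁻¹ 1 0) * hδ20
    · rw [hA 1 1]; linear_combination -(M'⁻¹ 1 1 * N'⁻¹ 1 1) * hδ20

lemma edr_of_pi2 (R : Type*) [CommRing R] (hR : IsHermiteRing R)
    (hPi : ∀ a : R, ∀ A : Matrix (Fin 2) (Fin 2) (R ⧸ Ideal.span {a}),
      MatUnimodular A → A.det = 0 → Extendable A) : IsEDR R := by
  intro A
  obtain ⟨r₁, s₁, t₁, hα, hβ, u₁, v₁, h1⟩ := hR (A 0 0) (A 0 1)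
  obtain ⟨r₂, s₂, t₂, hr₁, hγ, u₂, v₂, h2⟩ := hR r₁ (A 1 0)
  obtain ⟨r₃, s₃, t₃, hr₂, hδ, u₃, v₃, h3⟩ := hR r₂ (A 1 1)
  have hA00 : A 0 0 = r₃ * (s₃ * s₂ * s₁) := by rw [hα, hr₁, hr₂]; ring
  have hA01 : A 0 1 = r₃ * (s₃ * s₂ * t₁) := by rw [hβ, hr₁, hr₂]; ring
  have hA10 : A 1 0 = r₃ * (s₃ * t₂) := by rw [hγ, hr₂]; ring
  have hA11 : A 1 1 = r₃ * t₃ := hδ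
  set aa := s₃ * s₂ * s₁ * t₃ - s₃ * s₂ * t₁ * (s₃ * t₂) with haa
  set mk := Ideal.Quotient.mk (Ideal.span {aa}) with hmkdef
  set A'' : Matrix (Fin 2) (Fin 2) (R ⧸ Ideal.span {aa}) :=
    (!![s₃ * s₂ * s₁, s₃ * s₂ * t₁; s₃ * t₂, t₃]).map mk with hA''
  have e00 : A'' 0 0 = mk (s₃ * s₂ * s₁) := by simp [hA'']
  have e01 : A'' 0 1 = mk (s₃ * s₂ * t₁) := by simp [hA'']
  have e10 : A'' 1 0 = mk (s₃ * t₂) := by simp [hA'']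
  have e11 : A'' 1 1 = mk t₃ := by simp [hA'']
  have hmkaa : mk aa = 0 :=
    Ideal.Quotient.eq_zero_iff_mem.mpr (Ideal.mem_span_singleton_self aa)
  have hdet0 : A''.det = 0 := by
    rw [Matrix.det_fin_two, e00, e01, e10, e11, ← map_mul, ← map_mul, ← map_sub, ← haa, hmkaa]
  have huni : MatUnimodular A'' := by
    refine ⟨mk (u₃ * u₂ * u₁), mk (u₃ * u₂ * v₁), mk (u₃ * v₂), mk v₃, ?_⟩
    rw [e00, e01, e10, e11, ← map_mul, ← map_mul, ← map_mul, ← map_mul,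
      ← map_add, ← map_add, ← map_add]
    rw [show u₃ * u₂ * u₁ * (s₃ * s₂ * s₁) + u₃ * u₂ * v₁ * (s₃ * s₂ * t₁)
        + u₃ * v₂ * (s₃ * t₂) + v₃ * t₃ = 1 from by
      linear_combination (u₃ * u₂ * s₃ * s₂) * h1 + (u₃ * s₃) * h2 + h3]
    exact map_one mk
  obtain ⟨X₁, X₂, Y₁, Y₂, hXY⟩ := extendable_gives_form A'' hdet0 (hPi aa A'' huni hdet0)
  obtain ⟨x₁, hx₁⟩ := Ideal.Quotient.mk_surjective X₁
  obtain ⟨x₂, hx₂⟩ := Ideal.Quotient.mk_surjective X₂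
  obtain ⟨y₁, hy₁⟩ := Ideal.Quotient.mk_surjective Y₁
  obtain ⟨y₂, hy₂⟩ := Ideal.Quotient.mk_surjective Y₂
  rw [e00, e01, e10, e11, ← hx₁, ← hx₂, ← hy₁, ← hy₂, ← map_mul, ← map_mul, ← map_mul,
    ← map_mul, ← map_mul, ← map_mul, ← map_mul, ← map_mul,
    ← map_add, ← map_add, ← map_add] at hXY
  have hmem : x₁ * y₁ * (s₃ * s₂ * s₁) + x₁ * y₂ * (s₃ * s₂ * t₁)
      + x₂ * y₁ * (s₃ * t₂) + x₂ * y₂ * t₃ - 1 ∈ Ideal.span {aa} := by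
    rw [← Ideal.Quotient.eq_zero_iff_mem, map_sub, map_one, hXY, sub_self]
  obtain ⟨lam, hlam⟩ := Ideal.mem_span_singleton'.mp hmem
  refine diag_of_form hR A r₃ (s₃ * s₂ * s₁) (s₃ * s₂ * t₁) (s₃ * t₂) t₃ x₁ x₂ y₁ y₂ lam
    hA00 hA01 hA10 hA11 ?_
  rw [haa] at hlam
  linear_combination -hlam

/-- A Hermite ring is an elementary divisor ring iff `R/(a)` is a Π₂ ring for
every `a ∈ R`. -/
theorem hermite_edr_iff_quotients_pi2 (R : Type*) [CommRing R] (hR : IsHermiteRing R) :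
    IsEDR R ↔ ∀ a : R, ∀ A : Matrix (Fin 2) (Fin 2) (R ⧸ Ideal.span {a}),
      MatUnimodular A → A.det = 0 → Extendable A :=
  ⟨pi2_of_edr R, edr_of_pi2 R hR⟩
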